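/- For a bounded domain G ⊂ ℝⁿ and all x, y ∈ G, j*_G(x,y) ≥ |x-y| / diam(G). -/

import Mathlib

open Metric Set

noncomputable def dd {n : ℕ} (G : Set (EuclideanSpace ℝ (Fin n))) (x : EuclideanSpace ℝ (Fin n)) : ℝ :=
  Metric.infDist x (frontier G)

noncomputable def jMet {n : ℕ} (G : Set (EuclideanSpace ℝ (Fin n))) (x y : EuclideanSpace ℝ (Fin n)) : ℝ :=
  Real.log (1 + dist x y / min (dd G x) (dd G y))

noncomputable def jStar {n : ℕ} (G : Set (EuclideanSpace ℝ (Fin n))) (x y : EuclideanSpace ℝ (Fin n)) : ℝ :=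
  Real.tanh (jMet G x y / 2)

noncomputable def sMet {n : ℕ} (G : Set (EuclideanSpace ℝ (Fin n))) (x y : EuclideanSpace ℝ (Fin n)) : ℝ :=
  ⨆ z : frontier G, dist x y / (dist x (z : EuclideanSpace ℝ (Fin n)) + dist (z : EuclideanSpace ℝ (Fin n)) y)

noncomputable def pMet {n : ℕ} (G : Set (EuclideanSpace ℝ (Fin n))) (x y : EuclideanSpace ℝ (Fin n)) : ℝ :=
  dist x y / Real.sqrt (dist x y ^ 2 + 4 * dd G x * dd G y)

noncomputable def vMet {n : ℕ} (G : Set (EuclideanSpace ℝ (Fin n))) (x y : EuclideanSpace ℝ (Fin n)) : ℝ :=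
  ⨆ z : frontier G, EuclideanGeometry.angle x (z : EuclideanSpace ℝ (Fin n)) y

lemma tanh_half_log {u : ℝ} (hu : 0 < u) :
    Real.tanh (Real.log u / 2) = (u - 1) / (u + 1) := by
  rw [Real.tanh_eq_sinh_div_cosh, Real.sinh_eq, Real.cosh_eq]
  set a := Real.exp (Real.log u / 2) with ha
  have hapos : 0 < a := Real.exp_pos _
  have haa : a * a = u := by
    rw [ha, ← Real.exp_add]
    have : Real.log u / 2 + Real.log u / 2 = Real.log u := by ring
    rw [this, Real.exp_log hu]
  rw [Real.exp_neg]
  have h1 : a + a⁻¹ ≠ 0 := by positivity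
  field_simp
  nlinarith [haa]

lemma ball_dd_subset {n : ℕ} {G : Set (EuclideanSpace ℝ (Fin n))} (hGo : IsOpen G)
    {z : EuclideanSpace ℝ (Fin n)} (hz : z ∈ G) : ball z (dd G z) ⊆ G := by
  rcases le_or_gt (dd G z) 0 with h | h
  · simp [ball_eq_empty.2 h]
  · have hdisj : Disjoint (ball z (dd G z)) (frontier G) := disjoint_ball_infDist
    have hsub : ball z (dd G z) ⊆ G ∪ (closure G)ᶜ := by
      intro w hw
      by_contra hcon
      simp only [mem_union, mem_compl_iff, not_or, not_not] at hcon
      obtain ⟨h1, h2⟩ := hcon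
      exact hdisj.le_bot ⟨hw, h2, by rwa [hGo.interior_eq]⟩
    exact (convex_ball z (dd G z)).isPreconnected.subset_left_of_subset_union hGo
      isClosed_closure.isOpen_compl
      (disjoint_compl_right.mono_left subset_closure) hsub
      ⟨z, mem_ball_self h, hz⟩

theorem stmt4 {n : ℕ} (G : Set (EuclideanSpace ℝ (Fin n)))
    (hGo : IsOpen G) (hGc : IsConnected G) (hGb : Bornology.IsBounded G)
    (x y : EuclideanSpace ℝ (Fin n)) (hx : x ∈ G) (hy : y ∈ G) :
    jStar G x y ≥ dist x y / Metric.diam G := by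
  rcases eq_or_lt_of_le (dist_nonneg (x := x) (y := y)) with hD | hD
  · simp [jStar, jMet, ← hD]
  · -- dist x y > 0
    have hne : x ≠ y := by exact dist_pos.mp hD
    haveI : Nontrivial (EuclideanSpace ℝ (Fin n)) := nontrivial_of_ne x y hne
    have hGuniv : G ≠ univ := by
      intro h
      exact NormedSpace.unbounded_univ ℝ (EuclideanSpace ℝ (Fin n)) (h ▸ hGb)
    have hfr : (frontier G).Nonempty := nonempty_frontier_iff.2 ⟨⟨x, hx⟩, hGuniv⟩
    have hddpos : ∀ z ∈ G, 0 < dd G z := by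
      intro z hz
      have hnot : z ∉ frontier G := fun h => h.2 (by rwa [hGo.interior_eq])
      exact (IsClosed.notMem_iff_infDist_pos isClosed_frontier hfr).1 hnot
    set D := dist x y with hDdef
    set m := min (dd G x) (dd G y) with hm
    have hmx : m ≤ dd G x := min_le_left _ _
    have hmy : m ≤ dd G y := min_le_right _ _
    have hmpos : 0 < m := lt_min (hddpos x hx) (hddpos y hy)
    have hD0 : (D : ℝ) ≠ 0 := ne_of_gt hD
    have hDnorm : ‖y - x‖ = D := by rw [hDdef, dist_comm, dist_eq_norm]
    set e : EuclideanSpace ℝ (Fin n) := ‖y - x‖⁻¹ • (y - x) with he_def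
    have hDnorm0 : ‖y - x‖ ≠ 0 := by rw [hDnorm]; exact hD0
    have he : ‖e‖ = 1 := by
      rw [he_def, norm_smul, norm_inv, norm_norm, inv_mul_cancel₀ hDnorm0]
    have hyx : (D : ℝ) • e = y - x := by
      rw [he_def, smul_smul, ← hDnorm, mul_inv_cancel₀ hDnorm0, one_smul]
    set p : EuclideanSpace ℝ (Fin n) := x - m • e with hp_def
    set q : EuclideanSpace ℝ (Fin n) := y + m • e with hq_def
    have hclos : ∀ z ∈ G, ∀ w : EuclideanSpace ℝ (Fin n), dist w z ≤ dd G z → w ∈ closure G := by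
      intro z hz w hw
      have h1 : w ∈ closedBall z (dd G z) := mem_closedBall.2 hw
      rw [← closure_ball z (ne_of_gt (hddpos z hz))] at h1
      exact closure_mono (ball_dd_subset hGo hz) h1
    have hdistpx : dist p x = m := by
      have h2 : p - x = -(m • e) := by rw [hp_def]; abel
      rw [dist_eq_norm, h2, norm_neg, norm_smul, he, mul_one, Real.norm_eq_abs,
        abs_of_pos hmpos]
    have hdistqy : dist q y = m := by
      have h2 : q - y = m • e := by rw [hq_def]; abel
      rw [dist_eq_norm, h2, norm_smul, he, mul_one, Real.norm_eq_abs, abs_of_pos hmpos]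
    have hp : p ∈ closure G := hclos x hx p (by rw [hdistpx]; exact hmx)
    have hq : q ∈ closure G := hclos y hy q (by rw [hdistqy]; exact hmy)
    have hqp : q - p = (D + 2 * m) • e := by
      have h3 : q - p = (y - x) + (2 * m) • e := by rw [hq_def, hp_def]; module
      rw [h3, ← hyx, ← add_smul]
    have hpq : dist p q = D + 2 * m := by
      rw [dist_comm, dist_eq_norm, hqp, norm_smul, he, mul_one, Real.norm_eq_abs,
        abs_of_pos (by linarith)]
    have hdiam : D + 2 * m ≤ Metric.diam G := by
      calc D + 2 * m = dist p q := hpq.symm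
        _ ≤ Metric.diam (closure G) := dist_le_diam_of_mem hGb.closure hp hq
        _ = Metric.diam G := diam_closure _
    have hu : (0:ℝ) < 1 + D / m := by positivity
    have hj : jStar G x y = D / (D + 2 * m) := by
      unfold jStar jMet
      rw [← hDdef, ← hm, tanh_half_log hu]
      rw [div_eq_div_iff (by linarith) (by positivity)]
      field_simp
      ring
    rw [ge_iff_le, hj]
    gcongr
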